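/- Let E be a real normed vector space, let t₀ < T be real numbers, θ ∈ (0, 1) and L ∈ ℝ. Let u : ℝ → E and F : ℝ → ℝ be differentiable on [t₀, T], with derivative u'(t) of u and F'(t) of F, and suppose that F(t) > L for every t ∈ [t₀, T] and that −F'(t) ≥ (F(t) − L)^θ · ‖u'(t)‖ for every t ∈ [t₀, T]. Then ∫_{t₀}^{T} ‖u'(t)‖ dt ≤ (1/(1 − θ)) · ( (F(t₀) − L)^{1−θ} − (F(T) − L)^{1−θ} ) ≤ (1/(1 − θ)) · (F(t₀) − L)^{1−θ}. -/

import Mathlib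

open Real MeasureTheory

theorem stmt_12 {E : Type*} [NormedAddCommGroup E] [NormedSpace ℝ E]
    (t₀ T θ L : ℝ) (ht : t₀ < T) (hθ : θ ∈ Set.Ioo (0 : ℝ) 1)
    (u : ℝ → E) (u' : ℝ → E) (F F' : ℝ → ℝ)
    (hu : ∀ t ∈ Set.Icc t₀ T, HasDerivAt u (u' t) t)
    (hF : ∀ t ∈ Set.Icc t₀ T, HasDerivAt F (F' t) t)
    (hFL : ∀ t ∈ Set.Icc t₀ T, L < F t)
    (hineq : ∀ t ∈ Set.Icc t₀ T, (F t - L) ^ θ * ‖u' t‖ ≤ -F' t)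
    (hint : IntervalIntegrable (fun t => ‖u' t‖) volume t₀ T) :
    (∫ t in t₀..T, ‖u' t‖)
        ≤ (1 / (1 - θ)) * ((F t₀ - L) ^ (1 - θ) - (F T - L) ^ (1 - θ)) ∧
    (1 / (1 - θ)) * ((F t₀ - L) ^ (1 - θ) - (F T - L) ^ (1 - θ))
        ≤ (1 / (1 - θ)) * (F t₀ - L) ^ (1 - θ) := by
  obtain ⟨hθ0, hθ1⟩ := hθ
  have h1θ : (0:ℝ) < 1 - θ := by linarith
  set g : ℝ → ℝ := fun t => -(1 / (1 - θ)) * (F t - L) ^ (1 - θ) with hg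
  set g' : ℝ → ℝ := fun t => -(1 / (1 - θ)) * (F' t * (1 - θ) * (F t - L) ^ (1 - θ - 1))
  have hgd : ∀ t ∈ Set.Icc t₀ T, HasDerivAt g (g' t) t := by
    intro t htm
    have hpos : 0 < F t - L := sub_pos.mpr (hFL t htm)
    exact (((hF t htm).sub_const L).rpow_const (Or.inl hpos.ne')).const_mul _
  have hcont : ContinuousOn g (Set.Icc t₀ T) :=
    fun t htm => ((hgd t htm).continuousAt).continuousWithinAt
  have key : (∫ t in t₀..T, ‖u' t‖) ≤ g T - g t₀ := by
    apply intervalIntegral.integral_le_sub_of_hasDeriv_right_of_le ht.le hcont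
      (fun x hx => ((hgd x (Set.Ioo_subset_Icc_self hx)).hasDerivWithinAt))
      ((intervalIntegrable_iff_integrableOn_Icc_of_le ht.le).mp hint) ?_
    · intro x hx
      have hxm : x ∈ Set.Icc t₀ T := Set.Ioo_subset_Icc_self hx
      have hpos : 0 < F x - L := sub_pos.mpr (hFL x hxm)
      have hc : (0:ℝ) < (F x - L) ^ (-θ) := Real.rpow_pos_of_pos hpos _
      have h1 : (F x - L) ^ (-θ) * ((F x - L) ^ θ * ‖u' x‖) ≤ (F x - L) ^ (-θ) * (-F' x) :=
        mul_le_mul_of_nonneg_left (hineq x hxm) hc.le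
      have h2 : (F x - L) ^ (-θ) * (F x - L) ^ θ = 1 := by
        rw [← Real.rpow_add hpos]; simp
      have h3 : ‖u' x‖ ≤ (F x - L) ^ (-θ) * (-F' x) := by
        calc ‖u' x‖ = (F x - L) ^ (-θ) * (F x - L) ^ θ * ‖u' x‖ := by rw [h2, one_mul]
        _ ≤ (F x - L) ^ (-θ) * (-F' x) := by rw [mul_assoc]; exact h1
      have : g' x = (F x - L) ^ (-θ) * (-F' x) := by
        simp only [g']
        have : (1:ℝ) - θ - 1 = -θ := by ring
        rw [this]
        field_simp
      rw [this]
      exact h3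
  constructor
  · calc (∫ t in t₀..T, ‖u' t‖) ≤ g T - g t₀ := key
      _ = (1 / (1 - θ)) * ((F t₀ - L) ^ (1 - θ) - (F T - L) ^ (1 - θ)) := by
        simp only [g]; ring
  · apply mul_le_mul_of_nonneg_left _ (by positivity)
    have : (0:ℝ) ≤ (F T - L) ^ (1 - θ) :=
      Real.rpow_nonneg (sub_nonneg.mpr (hFL T (Set.right_mem_Icc.mpr ht.le)).le) _
    linarith
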